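/- Let C1, C2 be real numbers with 1/2 < C1 ≤ 1 and 1/2 < C2 ≤ 1, and let s, t : ℕ → ℝ be the SimRank iterates on K_{2,2} (s 0 = 0, t 0 = 0, s (k+1) = (C2/2)·(1 + t k), t (k+1) = (C1/2)·(1 + s k)). Then the sequence of evidence-based scores k ↦ (5/6)·s k converges to some limit L' ∈ ℝ with L' > (1/2)·C2; that is, in the limit the evidence-based SimRank score of the two ads of K_{2,2} strictly exceeds the evidence-based SimRank score (1/2)·C2 of the two ads of K_{1,2}. -/

import Mathlib

theorem evidence_simrank_K22_limit_gt_K12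
    (C1 C2 : ℝ) (hC1 : 1 / 2 < C1) (hC1' : C1 ≤ 1) (hC2 : 1 / 2 < C2) (hC2' : C2 ≤ 1)
    (s t : ℕ → ℝ)
    (hs0 : s 0 = 0) (ht0 : t 0 = 0)
    (hs : ∀ k, s (k + 1) = (C2 / 2) * (1 + t k))
    (ht : ∀ k, t (k + 1) = (C1 / 2) * (1 + s k)) :
    ∃ L' : ℝ, Filter.Tendsto (fun k => (5 / 6 : ℝ) * s k) Filter.atTop (nhds L') ∧
      L' > (1 / 2 : ℝ) * C2 := by
  have hden : (0 : ℝ) < 4 - C1 * C2 := by nlinarith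
  set Ls : ℝ := C2 * (2 + C1) / (4 - C1 * C2) with hLsdef
  set Lt : ℝ := C1 * (2 + C2) / (4 - C1 * C2) with hLtdef
  have hdenne : (4 : ℝ) - C1 * C2 ≠ 0 := ne_of_gt hden
  have hLs : Ls = (C2 / 2) * (1 + Lt) := by
    rw [hLsdef, hLtdef, one_add_div hdenne]; field_simp; ring
  have hLt : Lt = (C1 / 2) * (1 + Ls) := by
    rw [hLsdef, hLtdef]; field_simp; ring
  set M : ℝ := max |Ls| |Lt| with hM
  have hM0 : 0 ≤ M := le_trans (abs_nonneg _) (le_max_left _ _)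
  have key : ∀ k, |s k - Ls| ≤ (1/2)^k * M ∧ |t k - Lt| ≤ (1/2)^k * M := by
    intro k
    induction k with
    | zero =>
      simp [hs0, ht0, hM, abs_neg]
    | succ k ih =>
      obtain ⟨ih1, ih2⟩ := ih
      constructor
      · have h1 : s (k + 1) - Ls = (C2 / 2) * (t k - Lt) := by
          rw [hs, hLs]; ring
        rw [h1, abs_mul]
        have h2 : |C2 / 2| ≤ 1 / 2 := by
          rw [abs_of_pos (by linarith)]; linarith
        calc |C2 / 2| * |t k - Lt| ≤ (1/2) * ((1/2)^k * M) :=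
              mul_le_mul h2 ih2 (abs_nonneg _) (by norm_num)
          _ = (1/2)^(k+1) * M := by ring
      · have h1 : t (k + 1) - Lt = (C1 / 2) * (s k - Ls) := by
          rw [ht, hLt]; ring
        rw [h1, abs_mul]
        have h2 : |C1 / 2| ≤ 1 / 2 := by
          rw [abs_of_pos (by linarith)]; linarith
        calc |C1 / 2| * |s k - Ls| ≤ (1/2) * ((1/2)^k * M) :=
              mul_le_mul h2 ih1 (abs_nonneg _) (by norm_num)
          _ = (1/2)^(k+1) * M := by ring
  have hgeo : Filter.Tendsto (fun k => (1/2:ℝ)^k * M) Filter.atTop (nhds 0) := by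
    have := (tendsto_pow_atTop_nhds_zero_of_lt_one (by norm_num : (0:ℝ) ≤ 1/2)
      (by norm_num : (1/2:ℝ) < 1)).mul_const M
    simpa using this
  have hsL : Filter.Tendsto s Filter.atTop (nhds Ls) := by
    have h0 : Filter.Tendsto (fun k => s k - Ls) Filter.atTop (nhds 0) :=
      squeeze_zero_norm (fun k => (key k).1) hgeo
    have := h0.add_const Ls
    simpa using this
  refine ⟨(5/6 : ℝ) * Ls, (hsL.const_mul _), ?_⟩
  rw [gt_iff_lt, hLsdef, mul_div_assoc', lt_div_iff₀ hden]
  nlinarith [mul_pos (show (0:ℝ) < C2 by linarith) (show (0:ℝ) < 5 * C1 + 3 * C1 * C2 - 2 by nlinarith)]
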